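/- Let X be a random vector in ℝ^m and Y a random vector in ℝ^n, defined on a common probability space, such that each marginal cdf F_i of X_i (i = 1,…,m) and G_j of Y_j (j = 1,…,n) is continuous and strictly increasing with range (0,1). Let U = (F_1(X_1), …, F_m(X_m)) and V = (G_1(Y_1), …, G_n(Y_n)) be the pseudo-observation vectors. Then the Kullback–Leibler divergence of the joint law of (X, Y) from the product of the laws of X and Y equals the Kullback–Leibler divergence of the joint law of (U, V) from the product of the laws of U and V; i.e., the mutual information satisfies I(X;Y) = D_KL(law(U,V) ‖ law(U) ⊗ law(V)). -/
import Mathlib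


open MeasureTheory Set ENNReal Classical

/-- The Kullback–Leibler divergence `D_KL(μ‖ν) = ∫ log (dμ/dν) dμ` (in nats),
with value `∞` when `μ` is not absolutely continuous w.r.t. `ν` or the integral
does not exist. -/
noncomputable def klDiv {α : Type*} [MeasurableSpace α] (μ ν : Measure α) : ℝ≥0∞ :=
  if μ ≪ ν ∧ Integrable (fun x => Real.log (μ.rnDeriv ν x).toReal) μ
  then ENNReal.ofReal (∫ x, Real.log (μ.rnDeriv ν x).toReal ∂μ)
  else ⊤

/-- KL divergence is invariant under pushforward by a measurable embedding. -/
lemma klDiv_map_measurableEmbedding {α β : Type*} [MeasurableSpace α] [MeasurableSpace β]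
    {f : α → β} (hf : MeasurableEmbedding f) (μ ν : Measure α)
    [SigmaFinite μ] [SigmaFinite ν] :
    klDiv (μ.map f) (ν.map f) = klDiv μ ν := by
  have hac : μ.map f ≪ ν.map f ↔ μ ≪ ν := by
    constructor
    · intro h
      refine Measure.AbsolutelyContinuous.mk fun s hs hνs => ?_
      have h1 : (ν.map f) (f '' s) = 0 := by
        rw [hf.map_apply, hf.injective.preimage_image, hνs]
      have h2 := h h1
      rwa [hf.map_apply, hf.injective.preimage_image] at h2
    · exact hf.absolutelyContinuous_map
  by_cases h : μ ≪ ν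
  · have hrnν := hf.rnDeriv_map μ ν
    have hrn : (fun x ↦ (μ.map f).rnDeriv (ν.map f) (f x)) =ᵐ[μ] μ.rnDeriv ν := h.ae_eq hrnν
    have hcomp : (fun x => Real.log (((μ.map f).rnDeriv (ν.map f)) (f x)).toReal)
        =ᵐ[μ] (fun x => Real.log ((μ.rnDeriv ν x)).toReal) := by
      filter_upwards [hrn] with x hx; rw [hx]
    have hint : Integrable (fun y => Real.log ((μ.map f).rnDeriv (ν.map f) y).toReal) (μ.map f)
        ↔ Integrable (fun x => Real.log (μ.rnDeriv ν x).toReal) μ := by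
      rw [hf.integrable_map_iff]
      exact integrable_congr hcomp
    unfold klDiv
    by_cases hI : Integrable (fun x => Real.log (μ.rnDeriv ν x).toReal) μ
    · rw [if_pos ⟨hac.mpr h, hint.mpr hI⟩, if_pos ⟨h, hI⟩]
      congr 1
      rw [hf.integral_map]
      exact integral_congr_ae hcomp
    · rw [if_neg fun hh => hI (hint.mp hh.2), if_neg fun hh => hI hh.2]
  · unfold klDiv
    rw [if_neg fun hh => h (hac.mp hh.1), if_neg fun hh => h hh.1]

/-- **Mutual information via copulas** (equation (18) of the paper): if `X ∈ ℝ^m` and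
`Y ∈ ℝ^n` have continuous strictly increasing marginal cdfs `F i`, `G j` of range `(0,1)`,
and `U = (F 1 (X 1), …, F m (X m))`, `V = (G 1 (Y 1), …, G n (Y n))` are the
pseudo-observation vectors, then
`I(X;Y) = D_KL(law(X,Y) ‖ law X ⊗ law Y) = D_KL(law(U,V) ‖ law U ⊗ law V)`. -/
theorem mutual_information_eq_copula_kl
    {Ω : Type*} [MeasurableSpace Ω] (P : Measure Ω) [IsProbabilityMeasure P]
    (m n : ℕ) (hm : 1 ≤ m) (hn : 1 ≤ n)
    (X : Ω → Fin m → ℝ) (Y : Ω → Fin n → ℝ)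
    (hX_meas : Measurable X) (hY_meas : Measurable Y)
    (F : Fin m → ℝ → ℝ) (G : Fin n → ℝ → ℝ)
    (hF_cdf : ∀ i t, F i t = (P {ω | X ω i ≤ t}).toReal)
    (hG_cdf : ∀ j t, G j t = (P {ω | Y ω j ≤ t}).toReal)
    (hF_cont : ∀ i, Continuous (F i)) (hF_mono : ∀ i, StrictMono (F i))
    (hF_range : ∀ i, Set.range (F i) = Ioo (0 : ℝ) 1)
    (hG_cont : ∀ j, Continuous (G j)) (hG_mono : ∀ j, StrictMono (G j))
    (hG_range : ∀ j, Set.range (G j) = Ioo (0 : ℝ) 1)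
    (U : Ω → Fin m → ℝ) (V : Ω → Fin n → ℝ)
    (hU : ∀ ω i, U ω i = F i (X ω i)) (hV : ∀ ω j, V ω j = G j (Y ω j)) :
    klDiv (P.map (fun ω => (X ω, Y ω))) ((P.map X).prod (P.map Y))
      = klDiv (P.map (fun ω => (U ω, V ω))) ((P.map U).prod (P.map V)) := by
  classical
  set Φ : (Fin m → ℝ) → (Fin m → ℝ) := fun x i => F i (x i) with hΦdef
  set Ψ : (Fin n → ℝ) → (Fin n → ℝ) := fun y j => G j (y j) with hΨdef
  have hΦ_cont : Continuous Φ :=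
    continuous_pi fun i => (hF_cont i).comp (continuous_apply i)
  have hΨ_cont : Continuous Ψ :=
    continuous_pi fun j => (hG_cont j).comp (continuous_apply j)
  have hΦ_inj : Function.Injective Φ := fun x y hxy => by
    funext i
    exact (hF_mono i).injective (congrFun hxy i)
  have hΨ_inj : Function.Injective Ψ := fun x y hxy => by
    funext j
    exact (hG_mono j).injective (congrFun hxy j)
  set T : (Fin m → ℝ) × (Fin n → ℝ) → (Fin m → ℝ) × (Fin n → ℝ) :=
    fun p => (Φ p.1, Ψ p.2) with hTdef
  have hT_cont : Continuous T := (hΦ_cont.comp continuous_fst).prodMk (hΨ_cont.comp continuous_snd)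
  have hT_inj : Function.Injective T := fun p q hpq => by
    have h1 := hΦ_inj (congrArg Prod.fst hpq)
    have h2 := hΨ_inj (congrArg Prod.snd hpq)
    exact Prod.ext h1 h2
  have hT : MeasurableEmbedding T := hT_cont.measurableEmbedding hT_inj
  -- identify the mapped measures
  have hUeq : U = Φ ∘ X := by
    funext ω; funext i; simp [hΦdef, hU ω i]
  have hVeq : V = Ψ ∘ Y := by
    funext ω; funext j; simp [hΨdef, hV ω j]
  have hUV : (fun ω => (U ω, V ω)) = T ∘ (fun ω => (X ω, Y ω)) := by
    funext ω
    simp [hTdef, hUeq, hVeq]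
  have h1 : P.map (fun ω => (U ω, V ω)) = (P.map (fun ω => (X ω, Y ω))).map T := by
    rw [Measure.map_map hT.measurable (hX_meas.prodMk hY_meas), hUV]
  have hmapU : P.map U = (P.map X).map Φ := by
    rw [Measure.map_map hΦ_cont.measurable hX_meas, hUeq]
  have hmapV : P.map V = (P.map Y).map Ψ := by
    rw [Measure.map_map hΨ_cont.measurable hY_meas, hVeq]
  have : IsProbabilityMeasure (P.map X) := Measure.isProbabilityMeasure_map hX_meas.aemeasurable
  have : IsProbabilityMeasure (P.map Y) := Measure.isProbabilityMeasure_map hY_meas.aemeasurable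
  have : IsProbabilityMeasure (P.map (fun ω => (X ω, Y ω))) :=
    Measure.isProbabilityMeasure_map (hX_meas.prodMk hY_meas).aemeasurable
  have h2 : (P.map U).prod (P.map V) = ((P.map X).prod (P.map Y)).map T := by
    rw [hmapU, hmapV,
      Measure.map_prod_map (P.map X) (P.map Y) hΦ_cont.measurable hΨ_cont.measurable]
    rfl
  rw [h1, h2, klDiv_map_measurableEmbedding hT]
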